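/- (Example 2 integration by parts.) Let α > 0, β > 1, 0 < σ < 1, γ ∈ ℝ, and for s > 0 define f_s(t) = t^{α−1}(1−t)^{β−1}(1−σt)^{−γ} e^{−st} for t ∈ (0,1) and G(s) = ∫₀^1 f_s(t) dt. Then G is differentiable on (0,∞), and for every s > 0: −G′(s) = (1/s) · ∫₀^1 [ α − (β−1)·t/(1−t) + γσ·t/(1−σt) ] · f_s(t) dt, all integrals being absolutely convergent. -/

import Mathlib

open Real MeasureTheory


private lemma rpow_le_aux17 {x l : ℝ} (p : ℝ) (hl : 0 < l) (hlx : l ≤ x) (hx1 : x ≤ 1) :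
    x ^ p ≤ l ^ p + 1 := by
  rcases le_or_gt 0 p with hp | hp
  · have h1 : x ^ p ≤ 1 := Real.rpow_le_one (hl.trans_le hlx).le hx1 hp
    have h2 : (0:ℝ) ≤ l ^ p := Real.rpow_nonneg hl.le p
    linarith
  · have h1 : x ^ p ≤ l ^ p := Real.rpow_le_rpow_of_nonpos hl hlx hp.le
    linarith

private lemma int_rpow_Ioo17 {a : ℝ} (ha : -1 < a) :
    IntegrableOn (fun t : ℝ => t ^ a) (Set.Ioo 0 1) := by
  have h := intervalIntegral.intervalIntegrable_rpow' (a := (0:ℝ)) (b := 1) ha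
  rw [intervalIntegrable_iff_integrableOn_Ioc_of_le zero_le_one] at h
  exact h.mono_set Set.Ioo_subset_Ioc_self

private lemma int_rpow_sub_Ioo17 {a : ℝ} (ha : -1 < a) :
    IntegrableOn (fun t : ℝ => (1 - t) ^ a) (Set.Ioo 0 1) := by
  have h := (intervalIntegral.intervalIntegrable_rpow' (a := (0:ℝ)) (b := 1) ha).comp_sub_left 1
  simp only [sub_zero, sub_self] at h
  have h2 := h.symm
  rw [intervalIntegrable_iff_integrableOn_Ioc_of_le zero_le_one] at h2
  exact h2.mono_set Set.Ioo_subset_Ioc_self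

private lemma cont17 (α β σ γ s : ℝ) (hσ0 : 0 < σ) (hσ1 : σ < 1) :
    ContinuousOn
      (fun t : ℝ => t ^ (α - 1) * (1 - t) ^ (β - 1) * (1 - σ * t) ^ (-γ) * Real.exp (-s * t))
      (Set.Ioo 0 1) := by
  intro t ht
  obtain ⟨ht0, ht1⟩ := ht
  have h1t : (1:ℝ) - t ≠ 0 := by
    have : (0:ℝ) < 1 - t := by linarith
    exact this.ne'
  have hσt : (1:ℝ) - σ * t ≠ 0 := by
    have : (0:ℝ) < 1 - σ * t := by nlinarith
    exact this.ne'
  apply ContinuousAt.continuousWithinAt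
  have c1 : ContinuousAt (fun u : ℝ => u ^ (α - 1)) t :=
    continuousAt_id.rpow_const (Or.inl ht0.ne')
  have c2 : ContinuousAt (fun u : ℝ => (1 - u) ^ (β - 1)) t :=
    (continuousAt_const.sub continuousAt_id).rpow_const (Or.inl h1t)
  have c3 : ContinuousAt (fun u : ℝ => (1 - σ * u) ^ (-γ)) t :=
    (continuousAt_const.sub (continuousAt_const.mul continuousAt_id)).rpow_const (Or.inl hσt)
  have c4 : ContinuousAt (fun u : ℝ => Real.exp (-s * u)) t :=
    Real.continuous_exp.continuousAt.comp (continuousAt_const.mul continuousAt_id)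
  exact ((c1.mul c2).mul c3).mul c4

private lemma bounds17 (α β σ γ s : ℝ) (hα : 0 < α) (hβ : 1 < β)
    (hσ0 : 0 < σ) (hσ1 : σ < 1) (hs : 0 ≤ s) {t : ℝ} (ht : t ∈ Set.Ioo (0:ℝ) 1) :
    0 ≤ t ^ (α - 1) * (1 - t) ^ (β - 1) * (1 - σ * t) ^ (-γ) * Real.exp (-s * t) ∧
    t ^ (α - 1) * (1 - t) ^ (β - 1) * (1 - σ * t) ^ (-γ) * Real.exp (-s * t)
      ≤ ((1 - σ) ^ (-γ) + 1) * t ^ (α - 1) ∧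
    t ^ (α - 1) * (1 - t) ^ (β - 2) * (1 - σ * t) ^ (-γ) * Real.exp (-s * t)
      ≤ ((1 - σ) ^ (-γ) + 1) * (t ^ (α - 1) * (1 - t) ^ (β - 2)) ∧
    (1 - t) ^ (β - 1) = (1 - t) ^ (β - 2) * (1 - t) := by
  obtain ⟨ht0, ht1⟩ := ht
  have h1t : (0:ℝ) < 1 - t := by linarith
  have hσt : (0:ℝ) < 1 - σ * t := by nlinarith
  have hA : (0:ℝ) ≤ t ^ (α - 1) := Real.rpow_nonneg ht0.le _
  have hB : (0:ℝ) ≤ (1 - t) ^ (β - 2) := Real.rpow_nonneg h1t.le _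
  have hR0 : (0:ℝ) ≤ (1 - σ * t) ^ (-γ) := Real.rpow_nonneg hσt.le _
  have hE0 : (0:ℝ) < Real.exp (-s * t) := Real.exp_pos _
  have hQ0 : (0:ℝ) ≤ (1 - t) ^ (β - 1) := Real.rpow_nonneg h1t.le _
  have hQ1 : (1 - t) ^ (β - 1) ≤ 1 := Real.rpow_le_one h1t.le (by linarith) (by linarith)
  have hR : (1 - σ * t) ^ (-γ) ≤ (1 - σ) ^ (-γ) + 1 :=
    rpow_le_aux17 _ (by linarith) (by nlinarith) (by nlinarith)
  have hE : Real.exp (-s * t) ≤ 1 := Real.exp_le_one_iff.mpr (by nlinarith)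
  have hQeq : (1 - t) ^ (β - 1) = (1 - t) ^ (β - 2) * (1 - t) := by
    rw [show β - 1 = β - 2 + 1 by ring, Real.rpow_add_one h1t.ne']
  have hD : (0:ℝ) ≤ (1 - σ) ^ (-γ) + 1 := by
    have := Real.rpow_nonneg (by linarith : (0:ℝ) ≤ 1 - σ) (-γ); linarith
  refine ⟨by positivity, ?_, ?_, hQeq⟩
  · calc t ^ (α - 1) * (1 - t) ^ (β - 1) * (1 - σ * t) ^ (-γ) * Real.exp (-s * t)
        ≤ t ^ (α - 1) * 1 * ((1 - σ) ^ (-γ) + 1) * 1 := by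
          gcongr
      _ = ((1 - σ) ^ (-γ) + 1) * t ^ (α - 1) := by ring
  · calc t ^ (α - 1) * (1 - t) ^ (β - 2) * (1 - σ * t) ^ (-γ) * Real.exp (-s * t)
        ≤ t ^ (α - 1) * (1 - t) ^ (β - 2) * ((1 - σ) ^ (-γ) + 1) * 1 := by
          gcongr
      _ = ((1 - σ) ^ (-γ) + 1) * (t ^ (α - 1) * (1 - t) ^ (β - 2)) := by ring
private lemma int_f17 (α β σ γ s : ℝ) (hα : 0 < α) (hβ : 1 < β)
    (hσ0 : 0 < σ) (hσ1 : σ < 1) (hs : 0 ≤ s) :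
    IntegrableOn
      (fun t : ℝ => t ^ (α - 1) * (1 - t) ^ (β - 1) * (1 - σ * t) ^ (-γ) * Real.exp (-s * t))
      (Set.Ioo 0 1) := by
  apply Integrable.mono'
    ((int_rpow_Ioo17 (by linarith : (-1:ℝ) < α - 1)).const_mul ((1 - σ) ^ (-γ) + 1))
    ((cont17 α β σ γ s hσ0 hσ1).aestronglyMeasurable measurableSet_Ioo)
  filter_upwards [ae_restrict_mem measurableSet_Ioo] with t ht
  obtain ⟨h0, h2, -, -⟩ := bounds17 α β σ γ s hα hβ hσ0 hσ1 hs ht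
  rw [Real.norm_eq_abs, abs_of_nonneg h0]
  exact h2

private lemma int_tf17 (α β σ γ s : ℝ) (hα : 0 < α) (hβ : 1 < β)
    (hσ0 : 0 < σ) (hσ1 : σ < 1) (hs : 0 ≤ s) :
    IntegrableOn
      (fun t : ℝ => t * (t ^ (α - 1) * (1 - t) ^ (β - 1) * (1 - σ * t) ^ (-γ) * Real.exp (-s * t)))
      (Set.Ioo 0 1) := by
  apply Integrable.mono'
    ((int_rpow_Ioo17 (by linarith : (-1:ℝ) < α - 1)).const_mul ((1 - σ) ^ (-γ) + 1))
    ((continuousOn_id.mul (cont17 α β σ γ s hσ0 hσ1)).aestronglyMeasurable measurableSet_Ioo)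
  filter_upwards [ae_restrict_mem measurableSet_Ioo] with t ht
  obtain ⟨h0, h2, -, -⟩ := bounds17 α β σ γ s hα hβ hσ0 hσ1 hs ht
  simp only [Pi.mul_apply, id_eq]
  rw [Real.norm_eq_abs, abs_of_nonneg (mul_nonneg ht.1.le h0)]
  have h3 := mul_le_mul_of_nonneg_right ht.2.le h0
  rw [one_mul] at h3
  linarith
set_option maxHeartbeats 1000000 in
private lemma phif_bound17 (α β σ γ s : ℝ) (hα : 0 < α) (hβ : 1 < β)
    (hσ0 : 0 < σ) (hσ1 : σ < 1) (hs : 0 ≤ s) {t : ℝ} (ht : t ∈ Set.Ioo (0:ℝ) 1) :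
    |(α - (β - 1) * t / (1 - t) + γ * σ * t / (1 - σ * t)) *
        (t ^ (α - 1) * (1 - t) ^ (β - 1) * (1 - σ * t) ^ (-γ) * Real.exp (-s * t))|
      ≤ (|α| + (β - 1) + |γ| * σ / (1 - σ)) * ((1 - σ) ^ (-γ) + 1) *
          ((1/2 : ℝ) ^ (α - 1) + (1/2 : ℝ) ^ (β - 2) + 2) *
          (t ^ (α - 1) + (1 - t) ^ (β - 2)) := by
  obtain ⟨h0, h2, h3, hQeq⟩ := bounds17 α β σ γ s hα hβ hσ0 hσ1 hs ht
  obtain ⟨ht0, ht1⟩ := ht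
  have h1t : (0:ℝ) < 1 - t := by linarith
  have hσt : (0:ℝ) < 1 - σ * t := by nlinarith
  have hA : (0:ℝ) ≤ t ^ (α - 1) := Real.rpow_nonneg ht0.le _
  have hB : (0:ℝ) ≤ (1 - t) ^ (β - 2) := Real.rpow_nonneg h1t.le _
  have hR0 : (0:ℝ) ≤ (1 - σ * t) ^ (-γ) := Real.rpow_nonneg hσt.le _
  have hE0 : (0:ℝ) ≤ Real.exp (-s * t) := (Real.exp_pos _).le
  have hD : (0:ℝ) ≤ (1 - σ) ^ (-γ) + 1 := by
    have := Real.rpow_nonneg (by linarith : (0:ℝ) ≤ 1 - σ) (-γ); linarith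
  have hM : (0:ℝ) ≤ |α| + (β - 1) + |γ| * σ / (1 - σ) := by
    have h1 : (0:ℝ) ≤ |α| := abs_nonneg _
    have h2 : (0:ℝ) ≤ |γ| * σ / (1 - σ) :=
      div_nonneg (mul_nonneg (abs_nonneg _) hσ0.le) (by linarith)
    linarith
  have hc₀A : (0:ℝ) ≤ (1/2 : ℝ) ^ (α - 1) := Real.rpow_nonneg (by norm_num) _
  have hc₀B : (0:ℝ) ≤ (1/2 : ℝ) ^ (β - 2) := Real.rpow_nonneg (by norm_num) _
  -- |φ| ≤ |α| + (β-1)/(1-t) + |γ|σ/(1-σ)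
  have habs : |α - (β - 1) * t / (1 - t) + γ * σ * t / (1 - σ * t)|
      ≤ |α| + (β - 1) / (1 - t) + |γ| * σ / (1 - σ) := by
    have t1 : |(β - 1) * t / (1 - t)| ≤ (β - 1) / (1 - t) := by
      rw [abs_of_nonneg (div_nonneg (by nlinarith) h1t.le), div_le_div_iff₀ h1t h1t]
      nlinarith [mul_nonneg (mul_nonneg (by linarith : (0:ℝ) ≤ β - 1) h1t.le) h1t.le]
    have t2 : |γ * σ * t / (1 - σ * t)| ≤ |γ| * σ / (1 - σ) := by
      rw [abs_div, abs_of_pos hσt, abs_mul, abs_mul, abs_of_nonneg hσ0.le,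
        abs_of_nonneg ht0.le, div_le_div_iff₀ hσt (by linarith : (0:ℝ) < 1 - σ)]
      nlinarith [mul_nonneg (mul_nonneg (abs_nonneg γ) hσ0.le) ht0.le,
        mul_nonneg (abs_nonneg γ) hσ0.le]
    calc |α - (β - 1) * t / (1 - t) + γ * σ * t / (1 - σ * t)|
        ≤ |α - (β - 1) * t / (1 - t)| + |γ * σ * t / (1 - σ * t)| := abs_add_le _ _
      _ ≤ (|α| + |(β - 1) * t / (1 - t)|) + |γ * σ * t / (1 - σ * t)| := by
          gcongr
          exact abs_sub α _
      _ ≤ |α| + (β - 1) / (1 - t) + |γ| * σ / (1 - σ) := by linarith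
  -- pass to opaque variables
  obtain ⟨A, hAdef⟩ : ∃ A : ℝ, t ^ (α - 1) = A := ⟨_, rfl⟩
  obtain ⟨B, hBdef⟩ : ∃ B : ℝ, (1 - t) ^ (β - 2) = B := ⟨_, rfl⟩
  obtain ⟨R, hRdef⟩ : ∃ R : ℝ, (1 - σ * t) ^ (-γ) = R := ⟨_, rfl⟩
  obtain ⟨E, hEdef⟩ : ∃ E : ℝ, Real.exp (-s * t) = E := ⟨_, rfl⟩
  obtain ⟨D, hDdef⟩ : ∃ D : ℝ, (1 - σ) ^ (-γ) + 1 = D := ⟨_, rfl⟩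
  obtain ⟨cA, hcAdef⟩ : ∃ cA : ℝ, (1/2 : ℝ) ^ (α - 1) = cA := ⟨_, rfl⟩
  obtain ⟨cB, hcBdef⟩ : ∃ cB : ℝ, (1/2 : ℝ) ^ (β - 2) = cB := ⟨_, rfl⟩
  obtain ⟨N, hNdef⟩ : ∃ N : ℝ, |α| + (β - 1) + |γ| * σ / (1 - σ) = N := ⟨_, rfl⟩
  obtain ⟨φ, hφdef⟩ : ∃ φ : ℝ, α - (β - 1) * t / (1 - t) + γ * σ * t / (1 - σ * t) = φ := ⟨_, rfl⟩
  have hAB : A * B ≤ (cA + cB + 2) * (A + B) := by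
    rcases le_or_gt t (1/2) with h | h
    · have hBle : (1 - t) ^ (β - 2) ≤ (1/2 : ℝ) ^ (β - 2) + 1 :=
        rpow_le_aux17 _ (by norm_num) (by linarith) (by linarith)
      rw [hBdef, hcBdef] at hBle
      rw [hcAdef] at hc₀A
      rw [hAdef] at hA; rw [hBdef] at hB
      have k := mul_le_mul_of_nonneg_left hBle hA
      nlinarith [k, mul_nonneg hc₀A hA, mul_nonneg (by linarith : (0:ℝ) ≤ cA + cB + 2) hB]
    · have hAle : t ^ (α - 1) ≤ (1/2 : ℝ) ^ (α - 1) + 1 :=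
        rpow_le_aux17 _ (by norm_num) (by linarith) (by linarith)
      rw [hAdef, hcAdef] at hAle
      rw [hcBdef] at hc₀B
      rw [hAdef] at hA; rw [hBdef] at hB
      have k := mul_le_mul_of_nonneg_right hAle hB
      nlinarith [k, mul_nonneg hc₀B hB, mul_nonneg (by linarith : (0:ℝ) ≤ cA + cB + 2) hA]
  rw [hQeq] at h0 h2 ⊢
  rw [hAdef, hBdef, hRdef, hEdef] at h0 h2 h3 ⊢
  rw [hDdef] at h2 h3
  rw [hcAdef, hcBdef, hNdef, hφdef, hDdef]
  rw [hφdef] at habs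
  rw [hAdef] at hA
  rw [hBdef] at hB
  rw [hDdef] at hD
  rw [hNdef] at hM
  -- now everything opaque
  rw [abs_mul, abs_of_nonneg h0]
  have hfABRE : A * (B * (1 - t)) * R * E ≤ A * B * R * E := by nlinarith
  have e2 : (β - 1) / (1 - t) * (A * (B * (1 - t)) * R * E)
      = (β - 1) * (A * B * R * E) := by field_simp
  have hRE : A * (B * (1 - t)) * R * E ≤ D * (A * B) := le_trans hfABRE h3
  calc |φ| * (A * (B * (1 - t)) * R * E)
      ≤ (|α| + (β - 1) / (1 - t) + |γ| * σ / (1 - σ)) * (A * (B * (1 - t)) * R * E) :=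
        mul_le_mul_of_nonneg_right habs h0
    _ = |α| * (A * (B * (1 - t)) * R * E)
        + (β - 1) / (1 - t) * (A * (B * (1 - t)) * R * E)
        + |γ| * σ / (1 - σ) * (A * (B * (1 - t)) * R * E) := by ring
    _ ≤ |α| * (D * (A * B)) + (β - 1) * (D * (A * B))
        + |γ| * σ / (1 - σ) * (D * (A * B)) := by
        have k1 := mul_le_mul_of_nonneg_left hRE (abs_nonneg α)
        have k2 : (β - 1) / (1 - t) * (A * (B * (1 - t)) * R * E)
            ≤ (β - 1) * (D * (A * B)) := by
          rw [e2]; exact mul_le_mul_of_nonneg_left h3 (by linarith)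
        have k3 := mul_le_mul_of_nonneg_left hRE
          (div_nonneg (mul_nonneg (abs_nonneg γ) hσ0.le) (by linarith : (0:ℝ) ≤ 1 - σ))
        linarith
    _ = N * (D * (A * B)) := by rw [← hNdef, ← hDdef]; ring
    _ ≤ N * (D * ((cA + cB + 2) * (A + B))) := by
        apply mul_le_mul_of_nonneg_left _ (hNdef ▸ hM)
        exact mul_le_mul_of_nonneg_left hAB (hDdef ▸ hD)
    _ = N * D * (cA + cB + 2) * (A + B) := by ring

private lemma int_phif17 (α β σ γ s : ℝ) (hα : 0 < α) (hβ : 1 < β)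
    (hσ0 : 0 < σ) (hσ1 : σ < 1) (hs : 0 ≤ s) :
    IntegrableOn
      (fun t : ℝ => (α - (β - 1) * t / (1 - t) + γ * σ * t / (1 - σ * t)) *
        (t ^ (α - 1) * (1 - t) ^ (β - 1) * (1 - σ * t) ^ (-γ) * Real.exp (-s * t)))
      (Set.Ioo 0 1) := by
  have hcφ : ContinuousOn
      (fun t : ℝ => α - (β - 1) * t / (1 - t) + γ * σ * t / (1 - σ * t)) (Set.Ioo 0 1) := by
    apply ContinuousOn.add
    · apply ContinuousOn.sub continuousOn_const
      apply ContinuousOn.div (continuousOn_const.mul continuousOn_id)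
        (continuousOn_const.sub continuousOn_id)
      intro t ht
      have : (0:ℝ) < 1 - t := by have := ht.2; linarith
      simpa using this.ne'
    · apply ContinuousOn.div (continuousOn_const.mul continuousOn_id)
        (continuousOn_const.sub (continuousOn_const.mul continuousOn_id))
      intro t ht
      have : (0:ℝ) < 1 - σ * t := by
        obtain ⟨h1, h2⟩ := ht; nlinarith
      simpa using this.ne'
  apply Integrable.mono'
    (((int_rpow_Ioo17 (by linarith : (-1:ℝ) < α - 1)).add
      (int_rpow_sub_Ioo17 (by linarith : (-1:ℝ) < β - 2))).const_mul
      ((|α| + (β - 1) + |γ| * σ / (1 - σ)) * ((1 - σ) ^ (-γ) + 1) *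
        ((1/2 : ℝ) ^ (α - 1) + (1/2 : ℝ) ^ (β - 2) + 2)))
    ((hcφ.mul (cont17 α β σ γ s hσ0 hσ1)).aestronglyMeasurable measurableSet_Ioo)
  filter_upwards [ae_restrict_mem measurableSet_Ioo] with t ht
  rw [Real.norm_eq_abs]
  exact phif_bound17 α β σ γ s hα hβ hσ0 hσ1 hs ht
set_option maxHeartbeats 1000000 in
private lemma ibp17 (α β σ γ s : ℝ) (hα : 0 < α) (hβ : 1 < β)
    (hσ0 : 0 < σ) (hσ1 : σ < 1) (hs : 0 < s) :
    ∫ t in Set.Ioo (0:ℝ) 1,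
      ((α - (β - 1) * t / (1 - t) + γ * σ * t / (1 - σ * t)) *
         (t ^ (α - 1) * (1 - t) ^ (β - 1) * (1 - σ * t) ^ (-γ) * Real.exp (-s * t))
       - s * (t * (t ^ (α - 1) * (1 - t) ^ (β - 1) * (1 - σ * t) ^ (-γ) * Real.exp (-s * t))))
      = 0 := by
  set H : ℝ → ℝ := fun t => t ^ α * (1 - t) ^ (β - 1) * (1 - σ * t) ^ (-γ) * Real.exp (-s * t)
    with hHdef
  set H' : ℝ → ℝ := fun t =>
      (α - (β - 1) * t / (1 - t) + γ * σ * t / (1 - σ * t)) *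
        (t ^ (α - 1) * (1 - t) ^ (β - 1) * (1 - σ * t) ^ (-γ) * Real.exp (-s * t))
      - s * (t * (t ^ (α - 1) * (1 - t) ^ (β - 1) * (1 - σ * t) ^ (-γ) * Real.exp (-s * t)))
    with hH'def
  have hcont : ContinuousOn H (Set.Icc 0 1) := by
    intro t ht
    obtain ⟨ht0, ht1⟩ := ht
    have hσt : (1:ℝ) - σ * t ≠ 0 := by
      have : (0:ℝ) < 1 - σ * t := by nlinarith
      exact this.ne'
    apply ContinuousAt.continuousWithinAt
    have c1 : ContinuousAt (fun u : ℝ => u ^ α) t :=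
      continuousAt_id.rpow_const (Or.inr hα.le)
    have c2 : ContinuousAt (fun u : ℝ => (1 - u) ^ (β - 1)) t :=
      (continuousAt_const.sub continuousAt_id).rpow_const (Or.inr (by linarith))
    have c3 : ContinuousAt (fun u : ℝ => (1 - σ * u) ^ (-γ)) t :=
      (continuousAt_const.sub (continuousAt_const.mul continuousAt_id)).rpow_const (Or.inl hσt)
    have c4 : ContinuousAt (fun u : ℝ => Real.exp (-s * u)) t :=
      Real.continuous_exp.continuousAt.comp (continuousAt_const.mul continuousAt_id)
    exact ((c1.mul c2).mul c3).mul c4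
  have hderiv : ∀ t ∈ Set.Ioo (0:ℝ) 1, HasDerivAt H (H' t) t := by
    intro t ht
    obtain ⟨ht0, ht1⟩ := ht
    have h1t : (0:ℝ) < 1 - t := by linarith
    have hσt : (0:ℝ) < 1 - σ * t := by nlinarith
    have hP : HasDerivAt (fun u : ℝ => u ^ α) (α * t ^ (α - 1)) t :=
      Real.hasDerivAt_rpow_const (Or.inl ht0.ne')
    have hQ : HasDerivAt (fun u : ℝ => (1 - u) ^ (β - 1))
        ((-1) * (β - 1) * (1 - t) ^ (β - 1 - 1)) t :=
      ((hasDerivAt_id t).const_sub 1).rpow_const (Or.inl h1t.ne')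
    have hR : HasDerivAt (fun u : ℝ => (1 - σ * u) ^ (-γ))
        ((-(σ * 1)) * (-γ) * (1 - σ * t) ^ (-γ - 1)) t :=
      (((hasDerivAt_id t).const_mul σ).const_sub 1).rpow_const (Or.inl hσt.ne')
    have hE : HasDerivAt (fun u : ℝ => Real.exp (-s * u)) (Real.exp (-s * t) * (-s * 1)) t :=
      ((hasDerivAt_id t).const_mul (-s)).exp
    have hHt := ((hP.mul hQ).mul hR).mul hE
    refine hHt.congr_deriv ?_
    simp only [hH'def, Pi.mul_apply]
    have e1 : t ^ α = t ^ (α - 1) * t := by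
      rw [← Real.rpow_add_one ht0.ne' (α - 1)]
      congr 1
      ring
    have e4 : β - 1 - 1 = β - 2 := by ring
    have e2 : (1 - t) ^ (β - 1) = (1 - t) ^ (β - 2) * (1 - t) := by
      rw [show β - 1 = β - 2 + 1 by ring, Real.rpow_add_one h1t.ne']
    have e3 : (1 - σ * t) ^ (-γ) = (1 - σ * t) ^ (-γ - 1) * (1 - σ * t) := by
      rw [← Real.rpow_add_one hσt.ne' (-γ - 1)]
      congr 1
      ring
    rw [e4, e1, e2, e3]
    generalize (1 - σ * t) ^ (-γ - 1) = P
    generalize (1 - t) ^ (β - 2) = Q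
    generalize t ^ (α - 1) = A
    generalize Real.exp (-s * t) = E
    have hW0 : (1 - σ * t) ≠ 0 := hσt.ne'
    generalize 1 - σ * t = W at hW0 ⊢
    field_simp
    ring
  have hint : IntervalIntegrable H' volume 0 1 := by
    rw [intervalIntegrable_iff_integrableOn_Ioc_of_le zero_le_one,
      integrableOn_Ioc_iff_integrableOn_Ioo]
    exact (int_phif17 α β σ γ s hα hβ hσ0 hσ1 hs.le).sub
      ((int_tf17 α β σ γ s hα hβ hσ0 hσ1 hs.le).const_mul s)
  have h0 : H 0 = 0 := by
    simp only [hHdef]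
    rw [Real.zero_rpow hα.ne']
    ring
  have h1 : H 1 = 0 := by
    simp only [hHdef]
    rw [show (1:ℝ) - 1 = 0 by ring, Real.zero_rpow (show β - 1 ≠ 0 by linarith)]
    ring
  have hFTC := intervalIntegral.integral_eq_sub_of_hasDeriv_right_of_le zero_le_one hcont
    (fun t ht => (hderiv t ht).hasDerivWithinAt) hint
  rw [h0, h1, sub_zero] at hFTC
  rw [intervalIntegral.integral_of_le zero_le_one, MeasureTheory.integral_Ioc_eq_integral_Ioo]
    at hFTC
  exact hFTC
private lemma derivG17 (α β σ γ s : ℝ) (hα : 0 < α) (hβ : 1 < β)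
    (hσ0 : 0 < σ) (hσ1 : σ < 1) (hs : 0 < s) :
    HasDerivAt
      (fun x : ℝ => ∫ t in Set.Ioo (0:ℝ) 1,
        t ^ (α - 1) * (1 - t) ^ (β - 1) * (1 - σ * t) ^ (-γ) * Real.exp (-x * t))
      (∫ t in Set.Ioo (0:ℝ) 1,
        -(t * (t ^ (α - 1) * (1 - t) ^ (β - 1) * (1 - σ * t) ^ (-γ) * Real.exp (-s * t)))) s := by
  have key := hasDerivAt_integral_of_dominated_loc_of_deriv_le
    (μ := MeasureTheory.volume.restrict (Set.Ioo (0:ℝ) 1))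
    (F := fun (x : ℝ) (t : ℝ) =>
      t ^ (α - 1) * (1 - t) ^ (β - 1) * (1 - σ * t) ^ (-γ) * Real.exp (-x * t))
    (F' := fun (x : ℝ) (t : ℝ) =>
      -(t * (t ^ (α - 1) * (1 - t) ^ (β - 1) * (1 - σ * t) ^ (-γ) * Real.exp (-x * t))))
    (x₀ := s) (s := Metric.ball s (s / 2))
    (bound := fun t => ((1 - σ) ^ (-γ) + 1) * t ^ (α - 1))
    (Metric.ball_mem_nhds s (by positivity))
    (Filter.Eventually.of_forall fun x =>
      (cont17 α β σ γ x hσ0 hσ1).aestronglyMeasurable measurableSet_Ioo)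
    (int_f17 α β σ γ s hα hβ hσ0 hσ1 hs.le)
    (((continuousOn_id.mul (cont17 α β σ γ s hσ0 hσ1)).neg).aestronglyMeasurable
      measurableSet_Ioo)
    ?_ ((int_rpow_Ioo17 (by linarith : (-1:ℝ) < α - 1)).const_mul ((1 - σ) ^ (-γ) + 1)) ?_
  · exact key.2
  · -- bound
    filter_upwards [MeasureTheory.ae_restrict_mem measurableSet_Ioo] with t ht
    intro x hx
    have hx0 : (0:ℝ) ≤ x := by
      rw [Metric.mem_ball, Real.dist_eq] at hx
      have := abs_lt.mp hx
      linarith [this.1]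
    obtain ⟨h0, h2, -, -⟩ := bounds17 α β σ γ x hα hβ hσ0 hσ1 hx0 ht
    rw [norm_neg, Real.norm_eq_abs, abs_of_nonneg (mul_nonneg ht.1.le h0)]
    have h3 := mul_le_mul_of_nonneg_right ht.2.le h0
    rw [one_mul] at h3
    linarith
  · -- differentiability in x
    filter_upwards [MeasureTheory.ae_restrict_mem measurableSet_Ioo] with t _
    intro x _
    have hE : HasDerivAt (fun x : ℝ => Real.exp (-x * t)) (Real.exp (-x * t) * (-1 * t)) x :=
      ((hasDerivAt_id x).neg.mul_const t).exp
    have := hE.const_mul (t ^ (α - 1) * (1 - t) ^ (β - 1) * (1 - σ * t) ^ (-γ))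
    refine this.congr_deriv ?_
    ring
theorem stmt17 (α β σ γ : ℝ) (hα : 0 < α) (hβ : 1 < β)
    (hσ0 : 0 < σ) (hσ1 : σ < 1)
    (f : ℝ → ℝ → ℝ)
    (hf : ∀ s t : ℝ, f s t =
      t ^ (α - 1) * (1 - t) ^ (β - 1) * (1 - σ * t) ^ (-γ) * Real.exp (-s * t))
    (G : ℝ → ℝ)
    (hG : ∀ s : ℝ, G s = ∫ t in Set.Ioo (0 : ℝ) 1, f s t) :
    DifferentiableOn ℝ G (Set.Ioi (0 : ℝ)) ∧
    (∀ s > (0 : ℝ),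
      IntegrableOn (fun t => f s t) (Set.Ioo (0 : ℝ) 1) ∧
      IntegrableOn
        (fun t => (α - (β - 1) * t / (1 - t) + γ * σ * t / (1 - σ * t)) * f s t)
        (Set.Ioo (0 : ℝ) 1) ∧
      -deriv G s = (1 / s) *
        ∫ t in Set.Ioo (0 : ℝ) 1,
          (α - (β - 1) * t / (1 - t) + γ * σ * t / (1 - σ * t)) * f s t) := by
  have hG' : G = fun x : ℝ => ∫ t in Set.Ioo (0:ℝ) 1,
      t ^ (α - 1) * (1 - t) ^ (β - 1) * (1 - σ * t) ^ (-γ) * Real.exp (-x * t) := by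
    funext x
    rw [hG]
    simp only [hf]
  have hGd : ∀ s ∈ Set.Ioi (0:ℝ), HasDerivAt G
      (∫ t in Set.Ioo (0:ℝ) 1,
        -(t * (t ^ (α - 1) * (1 - t) ^ (β - 1) * (1 - σ * t) ^ (-γ) * Real.exp (-s * t)))) s := by
    intro s hs
    rw [hG']
    exact derivG17 α β σ γ s hα hβ hσ0 hσ1 (Set.mem_Ioi.mp hs)
  refine ⟨fun s hs => ((hGd s hs).differentiableAt).differentiableWithinAt, ?_⟩
  intro s hsp
  have hfint := int_f17 α β σ γ s hα hβ hσ0 hσ1 hsp.le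
  have hφint := int_phif17 α β σ γ s hα hβ hσ0 hσ1 hsp.le
  have htfint := int_tf17 α β σ γ s hα hβ hσ0 hσ1 hsp.le
  refine ⟨by simp only [hf]; exact hfint, by simp only [hf]; exact hφint, ?_⟩
  have hd := hGd s (Set.mem_Ioi.mpr hsp)
  have hderiv_eq : deriv G s = -(∫ t in Set.Ioo (0:ℝ) 1,
      t * (t ^ (α - 1) * (1 - t) ^ (β - 1) * (1 - σ * t) ^ (-γ) * Real.exp (-s * t))) := by
    rw [hd.deriv]
    exact MeasureTheory.integral_neg _
  have hibp := ibp17 α β σ γ s hα hβ hσ0 hσ1 hsp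
  rw [MeasureTheory.integral_sub hφint (htfint.const_mul s),
    MeasureTheory.integral_const_mul] at hibp
  simp only [hf]
  rw [hderiv_eq, neg_neg]
  rw [show (∫ t in Set.Ioo (0:ℝ) 1,
      (α - (β - 1) * t / (1 - t) + γ * σ * t / (1 - σ * t)) *
        (t ^ (α - 1) * (1 - t) ^ (β - 1) * (1 - σ * t) ^ (-γ) * Real.exp (-s * t)))
      = s * ∫ t in Set.Ioo (0:ℝ) 1,
          t * (t ^ (α - 1) * (1 - t) ^ (β - 1) * (1 - σ * t) ^ (-γ) * Real.exp (-s * t))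
    from by linarith]
  field_simp
  congr 1
  funext t
  ring
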